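/- Let f(ε) = (1+ε)·log(1+ε) − ε for ε > −1. For every real t > 0 and every ε > 0, e^{−t} · Σ_{k ∈ ℕ, k ≥ (1+ε)t} t^k/k! ≤ exp(−f(ε)·t). -/
import Mathlib

lemma real_exp_tsum (x : ℝ) : Real.exp x = ∑' n : ℕ, x ^ n / n.factorial := by
  rw [Real.exp_eq_exp_ℝ, NormedSpace.exp_eq_tsum_div]

/-- `f(ε) = (1+ε)·log(1+ε) − ε`. -/
noncomputable def chernoffRate (ε : ℝ) : ℝ := (1 + ε) * Real.log (1 + ε) - ε

/-- Upper-tail concentration of the Poisson weights: for `t > 0` and `ε > 0`,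
`e^{−t} Σ_{k ≥ (1+ε)t} t^k/k! ≤ exp(−f(ε) t)`. -/
theorem heat_kernel_upper_tail (t : ℝ) (ht : 0 < t) (ε : ℝ) (hε : 0 < ε) :
    Real.exp (-t) * (∑' k : ℕ, if (1 + ε) * t ≤ (k : ℝ) then t ^ k / (Nat.factorial k : ℝ) else 0)
      ≤ Real.exp (-(chernoffRate ε * t)) := by
  set θ := Real.log (1 + ε) with hθdef
  have h1ε : (0:ℝ) < 1 + ε := by linarith
  have hθ : 0 < θ := Real.log_pos (by linarith)
  set c := Real.exp (-(θ * ((1 + ε) * t))) with hc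
  have key : ∀ k : ℕ, (if (1 + ε) * t ≤ (k : ℝ) then t ^ k / (Nat.factorial k : ℝ) else 0)
      ≤ c * (((1 + ε) * t) ^ k / (Nat.factorial k : ℝ)) := by
    intro k
    have hfac : (0:ℝ) < Nat.factorial k := by positivity
    split_ifs with hk
    · have hek : (1 + ε) ^ k = Real.exp (θ * k) := by
        rw [mul_comm, Real.exp_nat_mul, Real.exp_log h1ε]
      have h1 : Real.exp (θ * ((1 + ε) * t)) ≤ Real.exp (θ * k) :=
        Real.exp_le_exp.mpr (by nlinarith)
      have h2 : (1:ℝ) ≤ c * (1 + ε) ^ k := by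
        rw [hek, hc, ← Real.exp_add]
        rw [show -(θ * ((1 + ε) * t)) + θ * k = θ * k - θ * ((1 + ε) * t) by ring]
        exact Real.one_le_exp (by nlinarith)
      calc t ^ k / (Nat.factorial k : ℝ) = 1 * (t ^ k / (Nat.factorial k : ℝ)) := by ring
        _ ≤ (c * (1 + ε) ^ k) * (t ^ k / (Nat.factorial k : ℝ)) := by
            apply mul_le_mul_of_nonneg_right h2; positivity
        _ = c * (((1 + ε) * t) ^ k / (Nat.factorial k : ℝ)) := by
            rw [mul_pow]; ring
    · positivity
  have hsum2 : Summable (fun k : ℕ => c * (((1 + ε) * t) ^ k / (Nat.factorial k : ℝ))) :=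
    (Real.summable_pow_div_factorial _).mul_left c
  have hsum1 : Summable (fun k : ℕ => if (1 + ε) * t ≤ (k : ℝ) then t ^ k / (Nat.factorial k : ℝ) else 0) := by
    apply Summable.of_nonneg_of_le _ key hsum2
    intro k; split_ifs <;> positivity
  have hle := Summable.tsum_le_tsum key hsum1 hsum2
  rw [tsum_mul_left, ← real_exp_tsum] at hle
  calc Real.exp (-t) * (∑' k : ℕ, if (1 + ε) * t ≤ (k : ℝ) then t ^ k / (Nat.factorial k : ℝ) else 0)
      ≤ Real.exp (-t) * (c * Real.exp ((1 + ε) * t)) := by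
        apply mul_le_mul_of_nonneg_left hle (Real.exp_pos _).le
    _ = Real.exp (-(chernoffRate ε * t)) := by
        rw [hc, ← Real.exp_add, ← Real.exp_add]
        congr 1
        simp only [chernoffRate, hθdef]; ring
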